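/- Let L : ℝ^{n×m} → ℝ^ℓ be linear, y ∈ image(L), and r = min{rank(X) : L(X) = y}. For γ > 0 let X_γ be a global minimizer of f_γ(X) = log det(X Xᵀ + γI) over {X : L(X) = y}. If X_γ converges as γ → 0⁺, then the limit X̄ satisfies rank(X̄) = r and X̄ minimizes Π_{i=1}^r σ_i(X) over all rank-r matrices X with L(X) = y; moreover σ_{r+1}(X_γ)² = O(γ). -/

import Mathlib

open Matrix Filter Polynomial Finset

lemma isHerm {n m : ℕ} (X : Matrix (Fin n) (Fin m) ℝ) : (X * Xᵀ).IsHermitian := by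
  have h : Xᵀ = Xᴴ := by
    ext i j
    simp [Matrix.conjTranspose_apply]
  rw [h]
  exact Matrix.isHermitian_mul_conjTranspose_self X

noncomputable def nuv {n m : ℕ} (X : Matrix (Fin n) (Fin m) ℝ) : Fin n → ℝ :=
  fun i => ((isHerm X).eigenvalues ∘ Tuple.sort ((isHerm X).eigenvalues)) i.rev

lemma nuv_nonneg {n m : ℕ} (X : Matrix (Fin n) (Fin m) ℝ) (i : Fin n) : 0 ≤ nuv X i := by
  have h : Xᵀ = Xᴴ := by ext i j; simp [Matrix.conjTranspose_apply]
  have hps : (X * Xᵀ).PosSemidef := by rw [h]; exact Matrix.posSemidef_self_mul_conjTranspose X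
  exact hps.eigenvalues_nonneg _

lemma nuv_antitone {n m : ℕ} (X : Matrix (Fin n) (Fin m) ℝ) : Antitone (nuv X) := by
  intro i j hij
  exact Tuple.monotone_sort ((isHerm X).eigenvalues) (Fin.rev_le_rev.2 hij)

noncomputable def sigEquiv {n m : ℕ} (X : Matrix (Fin n) (Fin m) ℝ) : Fin n ≃ Fin n :=
  (Fin.revPerm).trans (Tuple.sort ((isHerm X).eigenvalues))

lemma nuv_eq {n m : ℕ} (X : Matrix (Fin n) (Fin m) ℝ) (i : Fin n) :
    nuv X i = (isHerm X).eigenvalues (sigEquiv X i) := rfl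

lemma det_add_smul_one {n m : ℕ} (X : Matrix (Fin n) (Fin m) ℝ) (t : ℝ) :
    (X * Xᵀ + t • (1 : Matrix (Fin n) (Fin n) ℝ)).det = ∏ i, (nuv X i + t) := by
  have hA := isHerm X
  have hspec := hA.spectral_theorem
  set U : Matrix (Fin n) (Fin n) ℝ := (hA.eigenvectorUnitary : Matrix (Fin n) (Fin n) ℝ) with hU
  have hUU : U * star U = 1 := (Matrix.mem_unitaryGroup_iff).mp hA.eigenvectorUnitary.2
  have key : X * Xᵀ + t • (1 : Matrix (Fin n) (Fin n) ℝ)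
      = U * (Matrix.diagonal (fun i => hA.eigenvalues i + t)) * star U := by
    have h1 : X * Xᵀ = U * Matrix.diagonal (RCLike.ofReal ∘ hA.eigenvalues) * star U := hspec
    have h2 : t • (1 : Matrix (Fin n) (Fin n) ℝ) = U * (t • (1:Matrix (Fin n) (Fin n) ℝ)) * star U := by
      rw [Matrix.mul_smul, Matrix.smul_mul, Matrix.mul_one, hUU]
    calc X * Xᵀ + t • (1 : Matrix (Fin n) (Fin n) ℝ)
        = U * Matrix.diagonal (RCLike.ofReal ∘ hA.eigenvalues) * star U
            + U * (t • (1:Matrix (Fin n) (Fin n) ℝ)) * star U := by rw [← h1, ← h2]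
      _ = U * (Matrix.diagonal (RCLike.ofReal ∘ hA.eigenvalues) + t • (1:Matrix (Fin n) (Fin n) ℝ)) * star U := by
          rw [Matrix.mul_add, Matrix.add_mul]
      _ = U * (Matrix.diagonal (fun i => hA.eigenvalues i + t)) * star U := by
          congr 1
          congr 1
          ext i j
          by_cases hij : i = j <;>
            simp [Matrix.diagonal, hij, Matrix.one_apply, Matrix.smul_apply]
  rw [key, Matrix.det_mul_right_comm, hUU, Matrix.one_mul, Matrix.det_diagonal]
  exact (Equiv.prod_comp (sigEquiv X) (fun i => hA.eigenvalues i + t)).symm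

noncomputable def esym {n : ℕ} (k : ℕ) (ν : Fin n → ℝ) : ℝ :=
  ∑ S ∈ Finset.powersetCard k Finset.univ, ∏ i ∈ S, ν i

noncomputable def EP {n m : ℕ} (X : Matrix (Fin n) (Fin m) ℝ) : Polynomial ℝ :=
  ∏ i : Fin n, (Polynomial.X + Polynomial.C (nuv X i))

lemma EP_eval {n m : ℕ} (X : Matrix (Fin n) (Fin m) ℝ) (t : ℝ) :
    (EP X).eval t = (X * Xᵀ + t • (1 : Matrix (Fin n) (Fin n) ℝ)).det := by
  rw [det_add_smul_one, EP, Polynomial.eval_prod]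
  simp [add_comm]

lemma EP_coeff {n m : ℕ} (X : Matrix (Fin n) (Fin m) ℝ) {j : ℕ} (hj : j ≤ n) :
    (EP X).coeff j = esym (n - j) (nuv X) := by
  rw [EP, Finset.prod_X_add_C_coeff _ _ (by simpa using hj)]
  simp only [esym, Finset.card_univ, Fintype.card_fin]

lemma EP_natDegree {n m : ℕ} (X : Matrix (Fin n) (Fin m) ℝ) : (EP X).natDegree = n := by
  rw [EP, Polynomial.natDegree_prod _ _ (fun i _ => (Polynomial.monic_X_add_C _).ne_zero)]
  simp [Polynomial.natDegree_X_add_C]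

lemma continuous_det_aux {n m : ℕ} (t : ℝ) :
    Continuous fun X : Matrix (Fin n) (Fin m) ℝ =>
      (X * Xᵀ + t • (1 : Matrix (Fin n) (Fin n) ℝ)).det :=
  ((continuous_id.matrix_mul continuous_id.matrix_transpose).add continuous_const).matrix_det

lemma EP_coeff_continuous {n m : ℕ} (j : ℕ) :
    Continuous fun X : Matrix (Fin n) (Fin m) ℝ => (EP X).coeff j := by
  classical
  set v : Fin (n+1) → ℝ := fun i => (i : ℕ) with hv
  have hvs : Set.InjOn v (Finset.univ : Finset (Fin (n+1))) := by
    intro a _ b _ hab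
    exact Fin.ext (Nat.cast_injective hab)
  have key : ∀ X : Matrix (Fin n) (Fin m) ℝ, (EP X).coeff j
      = ∑ i : Fin (n+1), (X * Xᵀ + (v i) • (1 : Matrix (Fin n) (Fin n) ℝ)).det
          * (Lagrange.basis Finset.univ v i).coeff j := by
    intro X
    have hdeg : (EP X).degree < ((Finset.univ : Finset (Fin (n+1))).card : ℕ) := by
      rw [Finset.card_univ, Fintype.card_fin]
      refine lt_of_le_of_lt (Polynomial.degree_le_natDegree) ?_
      rw [EP_natDegree]
      exact_mod_cast Nat.lt_succ_self n
    have hint := Lagrange.eq_interpolate hvs hdeg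
    conv_lhs => rw [hint]
    rw [Lagrange.interpolate_apply, Polynomial.finset_sum_coeff]
    refine Finset.sum_congr rfl fun i _ => ?_
    rw [Polynomial.coeff_C_mul, EP_eval]
  have : (fun X : Matrix (Fin n) (Fin m) ℝ => (EP X).coeff j)
      = fun X => ∑ i : Fin (n+1), (X * Xᵀ + (v i) • (1 : Matrix (Fin n) (Fin n) ℝ)).det
          * (Lagrange.basis Finset.univ v i).coeff j := funext key
  rw [this]
  exact continuous_finset_sum _ fun i _ => (continuous_det_aux _).mul continuous_const

lemma esym_continuous {n m : ℕ} {k : ℕ} (hk : k ≤ n) :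
    Continuous fun X : Matrix (Fin n) (Fin m) ℝ => esym k (nuv X) := by
  have : (fun X : Matrix (Fin n) (Fin m) ℝ => esym k (nuv X))
      = fun X => (EP X).coeff (n - k) := by
    funext X
    rw [EP_coeff X (Nat.sub_le _ _), Nat.sub_sub_self hk]
  rw [this]
  exact EP_coeff_continuous _
lemma strictMono_le_val {k n : ℕ} (f : Fin k → Fin n) (hf : StrictMono f) (j : Fin k) :
    (j : ℕ) ≤ (f j : ℕ) := by
  obtain ⟨j, hj⟩ := j
  induction j with
  | zero => exact Nat.zero_le _
  | succ p ih =>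
    have hp : p < k := Nat.lt_of_succ_lt hj
    have h1 := ih hp
    have h2 : f ⟨p, hp⟩ < f ⟨p + 1, hj⟩ := hf (by simp [Fin.lt_def])
    have h3 := Fin.lt_def.mp h2
    simp only [Fin.val_mk] at h1 h3 ⊢
    omega

lemma topset_eq {n : ℕ} {k : ℕ} (hk : k ≤ n) :
    (Finset.univ.filter fun i : Fin n => (i : ℕ) < k) = Finset.univ.map (Fin.castLEEmb hk) := by
  ext i
  simp only [Finset.mem_filter, Finset.mem_univ, true_and, Finset.mem_map]
  constructor
  · intro hi; exact ⟨⟨i, hi⟩, rfl⟩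
  · rintro ⟨j, rfl⟩; exact j.2

lemma topset_card {n : ℕ} {k : ℕ} (hk : k ≤ n) :
    (Finset.univ.filter fun i : Fin n => (i : ℕ) < k).card = k := by
  rw [topset_eq hk, Finset.card_map, Finset.card_univ, Fintype.card_fin]

/-- product of `ν` over any `k`-subset is at most the product over the top `k` indices. -/
lemma prod_subset_le_top {n : ℕ} {ν : Fin n → ℝ} (hpos : ∀ i, 0 ≤ ν i) (hanti : Antitone ν)
    {k : ℕ} (hk : k ≤ n) (S : Finset (Fin n)) (hS : S.card = k) :
    ∏ i ∈ S, ν i ≤ ∏ i ∈ Finset.univ.filter (fun i : Fin n => (i : ℕ) < k), ν i := by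
  have hSm : S = Finset.univ.map ⟨fun j : Fin k => S.orderEmbOfFin hS j,
      (S.orderEmbOfFin hS).injective⟩ := by
    ext i
    simp only [Finset.mem_map, Finset.mem_univ, true_and, Function.Embedding.coeFn_mk]
    constructor
    · intro hi
      have : i ∈ Set.range (S.orderEmbOfFin hS) := by
        rw [Finset.range_orderEmbOfFin S hS]; exact hi
      obtain ⟨j, hj⟩ := this; exact ⟨j, hj⟩
    · rintro ⟨j, rfl⟩; exact Finset.orderEmbOfFin_mem S hS j
  rw [hSm, topset_eq hk, Finset.prod_map, Finset.prod_map]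
  refine Finset.prod_le_prod (fun j _ => hpos _) (fun j _ => hanti ?_)
  rw [Fin.le_def]
  exact strictMono_le_val _ (S.orderEmbOfFin hS).strictMono j

/-- elementary symmetric function -/
lemma esym_nonneg {n : ℕ} (k : ℕ) {ν : Fin n → ℝ} (hpos : ∀ i, 0 ≤ ν i) : 0 ≤ esym k ν :=
  Finset.sum_nonneg fun S _ => Finset.prod_nonneg fun i _ => hpos i

lemma top_mem_powersetCard {n k : ℕ} (hk : k ≤ n) :
    (Finset.univ.filter fun i : Fin n => (i : ℕ) < k) ∈ Finset.powersetCard k (Finset.univ : Finset (Fin n)) := by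
  rw [Finset.mem_powersetCard]
  exact ⟨Finset.subset_univ _, topset_card hk⟩

lemma top_prod_le_esym {n : ℕ} {ν : Fin n → ℝ} (hpos : ∀ i, 0 ≤ ν i) {k : ℕ} (hk : k ≤ n) :
    ∏ i ∈ Finset.univ.filter (fun i : Fin n => (i : ℕ) < k), ν i ≤ esym k ν := by
  unfold esym
  exact Finset.single_le_sum (f := fun S => ∏ i ∈ S, ν i)
    (fun S _ => Finset.prod_nonneg fun i _ => hpos i) (top_mem_powersetCard hk)

lemma esym_le_choose_mul {n : ℕ} {ν : Fin n → ℝ} (hpos : ∀ i, 0 ≤ ν i) (hanti : Antitone ν)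
    {k : ℕ} (hk : k ≤ n) :
    esym k ν ≤ (n.choose k : ℝ) * ∏ i ∈ Finset.univ.filter (fun i : Fin n => (i : ℕ) < k), ν i := by
  have hcard : (Finset.powersetCard k (Finset.univ : Finset (Fin n))).card = n.choose k := by
    rw [Finset.card_powersetCard, Finset.card_univ, Fintype.card_fin]
  calc esym k ν ≤ ∑ _S ∈ Finset.powersetCard k (Finset.univ : Finset (Fin n)),
        ∏ i ∈ Finset.univ.filter (fun i : Fin n => (i : ℕ) < k), ν i := by
        refine Finset.sum_le_sum fun S hS => ?_
        rw [Finset.mem_powersetCard] at hS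
        exact prod_subset_le_top hpos hanti hk S hS.2
    _ = (n.choose k : ℝ) * ∏ i ∈ Finset.univ.filter (fun i : Fin n => (i : ℕ) < k), ν i := by
        rw [Finset.sum_const, hcard, nsmul_eq_mul]

/-- if ν vanishes from index k on, esym k is exactly the top product -/
lemma esym_eq_top_prod {n : ℕ} {ν : Fin n → ℝ} {k : ℕ} (hk : k ≤ n)
    (hvan : ∀ i : Fin n, k ≤ (i : ℕ) → ν i = 0) :
    esym k ν = ∏ i ∈ Finset.univ.filter (fun i : Fin n => (i : ℕ) < k), ν i := by
  refine Finset.sum_eq_single_of_mem _ (top_mem_powersetCard hk) fun S hS hne => ?_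
  rw [Finset.mem_powersetCard] at hS
  have : ∃ i ∈ S, ¬ ((i : ℕ) < k) := by
    by_contra hcon
    push_neg at hcon
    have hsub : S ⊆ Finset.univ.filter (fun i : Fin n => (i : ℕ) < k) := fun i hi =>
      Finset.mem_filter.2 ⟨Finset.mem_univ _, hcon i hi⟩
    exact hne (Finset.eq_of_subset_of_card_le hsub (by rw [hS.2, topset_card hk]))
  obtain ⟨i, hiS, hik⟩ := this
  exact Finset.prod_eq_zero hiS (hvan i (not_lt.1 hik))

/-- if at least k entries are nonzero then the top k are positive -/
lemma pos_of_card_nonzero {n : ℕ} {ν : Fin n → ℝ} (hpos : ∀ i, 0 ≤ ν i) (hanti : Antitone ν)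
    {k : ℕ} (hcard : k ≤ (Finset.univ.filter fun i : Fin n => ν i ≠ 0).card)
    (i : Fin n) (hi : (i : ℕ) < k) : 0 < ν i := by
  rcases lt_or_eq_of_le (hpos i) with h | h
  · exact h
  exfalso
  have hsub : (Finset.univ.filter fun j : Fin n => ν j ≠ 0)
      ⊆ Finset.univ.filter (fun j : Fin n => (j : ℕ) < (i : ℕ)) := by
    intro j hj
    rw [Finset.mem_filter] at hj ⊢
    refine ⟨Finset.mem_univ _, ?_⟩
    by_contra hji
    push_neg at hji
    have : ν j ≤ ν i := hanti (Fin.le_def.2 hji)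
    exact hj.2 (le_antisymm (h ▸ this) (hpos j))
  have := Finset.card_le_card hsub
  rw [topset_card (le_of_lt i.2)] at this
  omega

/-- if exactly r entries are nonzero then ν vanishes from r on -/
lemma vanish_of_card_nonzero {n : ℕ} {ν : Fin n → ℝ} (hpos : ∀ i, 0 ≤ ν i) (hanti : Antitone ν)
    {r : ℕ} (hcard : (Finset.univ.filter fun i : Fin n => ν i ≠ 0).card = r)
    (i : Fin n) (hi : r ≤ (i : ℕ)) : ν i = 0 := by
  by_contra hne
  have hsub : Finset.univ.filter (fun j : Fin n => (j : ℕ) < (i : ℕ) + 1)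
      ⊆ (Finset.univ.filter fun j : Fin n => ν j ≠ 0) := by
    intro j hj
    rw [Finset.mem_filter] at hj ⊢
    refine ⟨Finset.mem_univ _, ?_⟩
    have hji : j ≤ i := Fin.le_def.2 (Nat.lt_succ_iff.1 hj.2)
    have : ν i ≤ ν j := hanti hji
    have hνi : 0 < ν i := lt_of_le_of_ne (hpos i) (Ne.symm hne)
    exact ne_of_gt (lt_of_lt_of_le hνi this)
  have := Finset.card_le_card hsub
  rw [topset_card i.2, hcard] at this
  omega

lemma rank_eq_card_nuv {n m : ℕ} (X : Matrix (Fin n) (Fin m) ℝ) :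
    X.rank = (Finset.univ.filter fun i => nuv X i ≠ 0).card := by
  have h : Xᵀ = Xᴴ := by ext i j; simp [Matrix.conjTranspose_apply]
  have h1 : (X * Xᵀ).rank = X.rank := by rw [h]; exact Matrix.rank_self_mul_conjTranspose X
  rw [← h1, (isHerm X).rank_eq_card_non_zero_eigs, Fintype.card_subtype]
  have := Fintype.card_congr (((sigEquiv X).subtypeEquiv (fun a => Iff.rfl)) :
    {i // (isHerm X).eigenvalues (sigEquiv X i) ≠ 0} ≃ {j // (isHerm X).eigenvalues j ≠ 0})
  rw [Fintype.card_subtype, Fintype.card_subtype] at this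
  rw [← this]
  congr 1

lemma eval_lower {n m : ℕ} (Z : Matrix (Fin n) (Fin m) ℝ) {γ : ℝ} (hγ : 0 ≤ γ)
    {k : ℕ} (hk : k ≤ n) :
    esym k (nuv Z) * γ ^ (n - k) ≤ ∏ i, (nuv Z i + γ) := by
  have heval : ∏ i, (nuv Z i + γ) = (EP Z).eval γ := by
    rw [EP_eval, det_add_smul_one]
  rw [heval, Polynomial.eval_eq_sum_range, EP_natDegree]
  have hco : esym k (nuv Z) * γ ^ (n - k) = (EP Z).coeff (n - k) * γ ^ (n - k) := by
    rw [EP_coeff Z (Nat.sub_le _ _), Nat.sub_sub_self hk]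
  rw [hco]
  refine Finset.single_le_sum (f := fun j => (EP Z).coeff j * γ ^ j) (fun j hj => ?_)
    (Finset.mem_range.2 (by omega))
  rw [Finset.mem_range] at hj
  show 0 ≤ (EP Z).coeff j * γ ^ j
  rw [EP_coeff Z (by omega)]
  exact mul_nonneg (esym_nonneg _ (nuv_nonneg Z)) (pow_nonneg hγ _)

lemma prod_sqrt {ι : Type*} (s : Finset ι) (f : ι → ℝ) (h : ∀ i ∈ s, 0 ≤ f i) :
    ∏ i ∈ s, Real.sqrt (f i) = Real.sqrt (∏ i ∈ s, f i) := by
  classical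
  induction s using Finset.induction with
  | empty => simp
  | insert a s' hni ih =>
    rw [Finset.prod_insert hni, Finset.prod_insert hni,
      ih (fun i hi => h i (Finset.mem_insert_of_mem hi)),
      ← Real.sqrt_mul (h a (Finset.mem_insert_self a s'))]

lemma notset_card {n k : ℕ} (hk : k ≤ n) :
    (Finset.univ.filter fun i : Fin n => ¬ (i : ℕ) < k).card = n - k := by
  have h := Finset.card_filter_add_card_filter_not
    (s := (Finset.univ : Finset (Fin n))) (p := fun i : Fin n => (i : ℕ) < k)
  rw [topset_card hk, Finset.card_univ, Fintype.card_fin] at h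
  omega

lemma notset_insert {n r : ℕ} (hrn : r < n) :
    (Finset.univ.filter fun i : Fin n => ¬ (i : ℕ) < r)
      = insert (⟨r, hrn⟩ : Fin n) (Finset.univ.filter fun i : Fin n => ¬ (i : ℕ) < r + 1) := by
  ext i
  simp only [Finset.mem_filter, Finset.mem_univ, true_and, Finset.mem_insert, Fin.ext_iff]
  omega

lemma topset_insert {n r : ℕ} (hrn : r < n) :
    (Finset.univ.filter fun i : Fin n => (i : ℕ) < r + 1)
      = insert (⟨r, hrn⟩ : Fin n) (Finset.univ.filter fun i : Fin n => (i : ℕ) < r) := by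
  ext i
  simp only [Finset.mem_filter, Finset.mem_univ, true_and, Finset.mem_insert, Fin.ext_iff]
  omega

lemma prod_split_vanish {n m : ℕ} (X : Matrix (Fin n) (Fin m) ℝ) {r : ℕ} (hrn : r ≤ n)
    (hvan : ∀ i : Fin n, r ≤ (i : ℕ) → nuv X i = 0) (γ : ℝ) :
    ∏ i, (nuv X i + γ)
      = (∏ i ∈ Finset.univ.filter (fun i : Fin n => (i : ℕ) < r), (nuv X i + γ)) * γ ^ (n - r) := by
  rw [← Finset.prod_filter_mul_prod_filter_not Finset.univ (fun i : Fin n => (i : ℕ) < r)]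
  congr 1
  rw [← notset_card hrn]
  rw [Finset.prod_congr rfl (fun i hi => ?_), Finset.prod_const]
  rw [Finset.mem_filter] at hi
  rw [hvan i (not_lt.1 hi.2), zero_add]

/-- The singular values of `X`, in decreasing order. -/
noncomputable def singval {n m : ℕ} (X : Matrix (Fin n) (Fin m) ℝ) : Fin n → ℝ :=
  fun i => Real.sqrt
    (((isHerm X).eigenvalues ∘ Tuple.sort ((isHerm X).eigenvalues)) i.rev)

lemma singval_eq {n m : ℕ} (X : Matrix (Fin n) (Fin m) ℝ) (i : Fin n) :
    singval X i = Real.sqrt (nuv X i) := rfl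

/-- `f_γ(X) = log det(X Xᵀ + γ I)`. -/
noncomputable def fgamma {n m : ℕ} (γ : ℝ) (X : Matrix (Fin n) (Fin m) ℝ) : ℝ :=
  Real.log (X * Xᵀ + γ • (1 : Matrix (Fin n) (Fin n) ℝ)).det

theorem convergence_of_global_minimizers {n m l : ℕ} (hnm : n ≤ m)
    (L : Matrix (Fin n) (Fin m) ℝ →ₗ[ℝ] (Fin l → ℝ)) (y : Fin l → ℝ)
    (r : ℕ) (hr : IsLeast {k : ℕ | ∃ X, L X = y ∧ X.rank = k} r)
    (Xγ : ℝ → Matrix (Fin n) (Fin m) ℝ)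
    (hmin : ∀ γ : ℝ, 0 < γ →
      L (Xγ γ) = y ∧ ∀ X, L X = y → fgamma γ (Xγ γ) ≤ fgamma γ X)
    (Xbar : Matrix (Fin n) (Fin m) ℝ)
    (hlim : Tendsto Xγ (nhdsWithin 0 (Set.Ioi 0)) (nhds Xbar)) :
    L Xbar = y ∧ Xbar.rank = r ∧
    (∀ X : Matrix (Fin n) (Fin m) ℝ, L X = y → X.rank = r →
      (∏ i ∈ Finset.univ.filter (fun i : Fin n => (i : ℕ) < r), singval Xbar i)
        ≤ ∏ i ∈ Finset.univ.filter (fun i : Fin n => (i : ℕ) < r), singval X i) ∧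
    (∀ hrn : r < n,
      (fun γ : ℝ => (singval (Xγ γ) ⟨r, hrn⟩) ^ 2)
        =O[nhdsWithin 0 (Set.Ioi 0)] (fun γ : ℝ => γ)) := by
  classical
  obtain ⟨⟨Xs, hXsy, hXsrank⟩, hlb⟩ := hr
  have hLcont : Continuous L := L.continuous_of_finiteDimensional
  -- the limit is feasible
  have hy : L Xbar = y := by
    have h1 : Tendsto (fun γ => L (Xγ γ)) (nhdsWithin 0 (Set.Ioi 0)) (nhds (L Xbar)) :=
      (hLcont.tendsto _).comp hlim
    have h2 : Tendsto (fun _ : ℝ => y) (nhdsWithin 0 (Set.Ioi 0)) (nhds (L Xbar)) := by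
      refine h1.congr' ?_
      filter_upwards [self_mem_nhdsWithin] with γ hγ
      exact (hmin γ hγ).1
    exact (tendsto_nhds_unique h2 tendsto_const_nhds)
  have hrge : r ≤ Xbar.rank := hlb ⟨Xbar, hy, rfl⟩
  have hrankn : Xbar.rank ≤ n := Xbar.rank_le_height
  have hrn : r ≤ n := hrge.trans hrankn
  -- determinant comparison from the log-det minimality
  have hdet : ∀ γ : ℝ, 0 < γ → ∀ X, L X = y →
      ∏ i, (nuv (Xγ γ) i + γ) ≤ ∏ i, (nuv X i + γ) := by
    intro γ hγ X hX
    have h1 := (hmin γ hγ).2 X hX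
    rw [fgamma, fgamma] at h1
    rw [det_add_smul_one, det_add_smul_one] at h1
    have p1 : 0 < ∏ i, (nuv (Xγ γ) i + γ) :=
      Finset.prod_pos fun i _ => by linarith [nuv_nonneg (Xγ γ) i]
    have p2 : 0 < ∏ i, (nuv X i + γ) :=
      Finset.prod_pos fun i _ => by linarith [nuv_nonneg X i]
    exact (Real.log_le_log_iff p1 p2).1 h1
  -- limit of the continuous surrogate `esym r`
  have hErT : Tendsto (fun γ => esym r (nuv (Xγ γ))) (nhdsWithin 0 (Set.Ioi 0))
      (nhds (esym r (nuv Xbar))) := ((esym_continuous hrn).tendsto Xbar).comp hlim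
  set c := esym r (nuv Xbar) with hcdef
  have hcardXbar : r ≤ (Finset.univ.filter fun i => nuv Xbar i ≠ 0).card := by
    rw [← rank_eq_card_nuv]; exact hrge
  have hPbar_pos : 0 < ∏ i ∈ Finset.univ.filter (fun i : Fin n => (i : ℕ) < r), nuv Xbar i :=
    Finset.prod_pos fun i hi => pos_of_card_nonzero (nuv_nonneg Xbar) (nuv_antitone Xbar)
      hcardXbar i (Finset.mem_filter.1 hi).2
  have hc : 0 < c := lt_of_lt_of_le hPbar_pos (top_prod_le_esym (nuv_nonneg Xbar) hrn)
  set C : ℝ := (n.choose r : ℝ) with hCdef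
  have hC : 0 < C := by rw [hCdef]; exact_mod_cast Nat.choose_pos hrn
  set M : ℝ := ∏ i ∈ Finset.univ.filter (fun i : Fin n => (i : ℕ) < r), (nuv Xs i + 1) with hMdef
  have hM : 0 < M := Finset.prod_pos fun i _ => by linarith [nuv_nonneg Xs i]
  set K : ℝ := 2 * C * M / c with hKdef
  have hK : 0 < K := by positivity
  -- rank-r matrices have vanishing small values
  have hvan : ∀ X : Matrix (Fin n) (Fin m) ℝ, X.rank = r →
      ∀ i : Fin n, r ≤ (i : ℕ) → nuv X i = 0 := by
    intro X hX i hi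
    refine vanish_of_card_nonzero (nuv_nonneg X) (nuv_antitone X) ?_ i hi
    rw [← rank_eq_card_nuv]; exact hX
  -- upper bound via the rank-r reference point
  have hub : ∀ γ : ℝ, 0 < γ → γ ≤ 1 → ∏ i, (nuv (Xγ γ) i + γ) ≤ M * γ ^ (n - r) := by
    intro γ hγ hγ1
    refine le_trans (hdet γ hγ Xs hXsy) ?_
    rw [prod_split_vanish Xs hrn (hvan Xs hXsrank) γ]
    refine mul_le_mul_of_nonneg_right ?_ (pow_nonneg hγ.le _)
    exact Finset.prod_le_prod (fun i _ => by linarith [nuv_nonneg Xs i]) (fun i _ => by linarith)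
  -- eventual facts
  have hev1 : ∀ᶠ γ in nhdsWithin (0:ℝ) (Set.Ioi 0), γ ∈ Set.Ioo (0:ℝ) 1 :=
    Ioo_mem_nhdsGT one_pos
  have hev2 : ∀ᶠ γ in nhdsWithin (0:ℝ) (Set.Ioi 0), c / 2 ≤ esym r (nuv (Xγ γ)) :=
    hErT.eventually (eventually_ge_nhds (by linarith))
  have hev3 : ∀ᶠ γ in nhdsWithin (0:ℝ) (Set.Ioi 0), esym r (nuv (Xγ γ)) ≤ c + 1 :=
    hErT.eventually (eventually_le_nhds (by linarith))
  -- quantitative estimate on the (r+1)-st squared singular value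
  have hq : ∀ hrn' : r < n, ∀ᶠ γ in nhdsWithin (0:ℝ) (Set.Ioi 0),
      0 ≤ nuv (Xγ γ) ⟨r, hrn'⟩ ∧ nuv (Xγ γ) ⟨r, hrn'⟩ ≤ K * γ := by
    intro hrn'
    filter_upwards [hev1, hev2] with γ hγIoo hE2
    obtain ⟨hγ, hγ1⟩ := hγIoo
    refine ⟨nuv_nonneg _ _, ?_⟩
    set w := nuv (Xγ γ) with hw
    have hwnn : ∀ i, 0 ≤ w i := nuv_nonneg (Xγ γ)
    have hsplit : ∏ i, (w i + γ)
        = (∏ i ∈ Finset.univ.filter (fun i : Fin n => (i : ℕ) < r), (w i + γ))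
          * ∏ i ∈ Finset.univ.filter (fun i : Fin n => ¬ (i : ℕ) < r), (w i + γ) :=
      (Finset.prod_filter_mul_prod_filter_not Finset.univ _ _).symm
    have hnot : (w ⟨r, hrn'⟩ + γ) * γ ^ (n - r - 1)
        ≤ ∏ i ∈ Finset.univ.filter (fun i : Fin n => ¬ (i : ℕ) < r), (w i + γ) := by
      rw [notset_insert hrn', Finset.prod_insert (by simp)]
      refine mul_le_mul_of_nonneg_left ?_ (by linarith [hwnn ⟨r, hrn'⟩])
      calc γ ^ (n - r - 1)
          = ∏ _i ∈ Finset.univ.filter (fun i : Fin n => ¬ (i : ℕ) < r + 1), γ := by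
            rw [Finset.prod_const, notset_card (by omega : r + 1 ≤ n)]
            congr 1
        _ ≤ _ := Finset.prod_le_prod (fun _ _ => hγ.le) (fun i _ => by linarith [hwnn i])
    have htop : c / 2 ≤ C * ∏ i ∈ Finset.univ.filter (fun i : Fin n => (i : ℕ) < r), (w i + γ) := by
      have h1 : esym r w ≤ C * ∏ i ∈ Finset.univ.filter (fun i : Fin n => (i : ℕ) < r), w i :=
        esym_le_choose_mul hwnn (nuv_antitone (Xγ γ)) hrn
      have h3 : ∏ i ∈ Finset.univ.filter (fun i : Fin n => (i : ℕ) < r), w i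
          ≤ ∏ i ∈ Finset.univ.filter (fun i : Fin n => (i : ℕ) < r), (w i + γ) :=
        Finset.prod_le_prod (fun i _ => hwnn i) (fun i _ => by linarith)
      calc c / 2 ≤ esym r w := hE2
        _ ≤ C * ∏ i ∈ Finset.univ.filter (fun i : Fin n => (i : ℕ) < r), w i := h1
        _ ≤ _ := mul_le_mul_of_nonneg_left h3 hC.le
    have hZnn : 0 ≤ (w ⟨r, hrn'⟩ + γ) * γ ^ (n - r - 1) :=
      mul_nonneg (by linarith [hwnn ⟨r, hrn'⟩]) (pow_nonneg hγ.le _)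
    have hchain : (c / 2) * ((w ⟨r, hrn'⟩ + γ) * γ ^ (n - r - 1)) ≤ C * (M * γ ^ (n - r)) := by
      calc (c / 2) * ((w ⟨r, hrn'⟩ + γ) * γ ^ (n - r - 1))
          ≤ (C * ∏ i ∈ Finset.univ.filter (fun i : Fin n => (i : ℕ) < r), (w i + γ))
              * ((w ⟨r, hrn'⟩ + γ) * γ ^ (n - r - 1)) :=
            mul_le_mul_of_nonneg_right htop hZnn
        _ = C * ((∏ i ∈ Finset.univ.filter (fun i : Fin n => (i : ℕ) < r), (w i + γ))
              * ((w ⟨r, hrn'⟩ + γ) * γ ^ (n - r - 1))) := by ring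
        _ ≤ C * ((∏ i ∈ Finset.univ.filter (fun i : Fin n => (i : ℕ) < r), (w i + γ))
              * ∏ i ∈ Finset.univ.filter (fun i : Fin n => ¬ (i : ℕ) < r), (w i + γ)) := by
            refine mul_le_mul_of_nonneg_left (mul_le_mul_of_nonneg_left hnot
              (Finset.prod_nonneg fun i _ => by linarith [hwnn i])) hC.le
        _ = C * ∏ i, (w i + γ) := by rw [← hsplit]
        _ ≤ C * (M * γ ^ (n - r)) := mul_le_mul_of_nonneg_left (hub γ hγ hγ1.le) hC.le
    have hfin : ((c / 2) * (w ⟨r, hrn'⟩ + γ)) * γ ^ (n - r - 1)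
        ≤ (C * M * γ) * γ ^ (n - r - 1) := by
      have hnr : γ ^ (n - r) = γ ^ (n - r - 1) * γ := by
        rw [← pow_succ]
        congr 1
        omega
      calc ((c / 2) * (w ⟨r, hrn'⟩ + γ)) * γ ^ (n - r - 1)
          = (c / 2) * ((w ⟨r, hrn'⟩ + γ) * γ ^ (n - r - 1)) := by ring
        _ ≤ C * (M * γ ^ (n - r)) := hchain
        _ = (C * M * γ) * γ ^ (n - r - 1) := by rw [hnr]; ring
    have hfin2 : (c / 2) * (w ⟨r, hrn'⟩ + γ) ≤ C * M * γ :=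
      le_of_mul_le_mul_right hfin (pow_pos hγ _)
    have hKγ : (c / 2) * (K * γ) = C * M * γ := by
      rw [hKdef]; field_simp
    have h9 : w ⟨r, hrn'⟩ + γ ≤ K * γ :=
      le_of_mul_le_mul_left (by rw [hKγ]; exact hfin2) (by linarith : (0:ℝ) < c / 2)
    linarith
  -- the limit has rank exactly r
  have hrankXbar : Xbar.rank = r := by
    rcases eq_or_lt_of_le hrn with heq | hrn'
    · exact le_antisymm (heq ▸ hrankn) hrge
    · refine le_antisymm ?_ hrge
      by_contra hgt
      push_neg at hgt
      have hE1T : Tendsto (fun γ => esym (r + 1) (nuv (Xγ γ))) (nhdsWithin 0 (Set.Ioi 0))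
          (nhds (esym (r + 1) (nuv Xbar))) :=
        ((esym_continuous (by omega : r + 1 ≤ n)).tendsto Xbar).comp hlim
      have hbound : ∀ᶠ γ in nhdsWithin (0:ℝ) (Set.Ioi 0),
          esym (r + 1) (nuv (Xγ γ)) ≤ ((n.choose (r + 1) : ℝ) * ((c + 1) * K)) * γ := by
        filter_upwards [hev1, hev3, hq hrn'] with γ hγIoo hE3 hqq
        obtain ⟨hγ, hγ1⟩ := hγIoo
        have hwnn : ∀ i, 0 ≤ nuv (Xγ γ) i := nuv_nonneg (Xγ γ)
        have h1 : esym (r + 1) (nuv (Xγ γ)) ≤ (n.choose (r + 1) : ℝ)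
            * ∏ i ∈ Finset.univ.filter (fun i : Fin n => (i : ℕ) < r + 1), nuv (Xγ γ) i :=
          esym_le_choose_mul hwnn (nuv_antitone (Xγ γ)) (by omega)
        have h2 : ∏ i ∈ Finset.univ.filter (fun i : Fin n => (i : ℕ) < r + 1), nuv (Xγ γ) i
            = nuv (Xγ γ) ⟨r, hrn'⟩
              * ∏ i ∈ Finset.univ.filter (fun i : Fin n => (i : ℕ) < r), nuv (Xγ γ) i := by
          rw [topset_insert hrn', Finset.prod_insert (by simp)]
        have h3 : ∏ i ∈ Finset.univ.filter (fun i : Fin n => (i : ℕ) < r), nuv (Xγ γ) i ≤ c + 1 :=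
          le_trans (top_prod_le_esym hwnn hrn) hE3
        have h4 : 0 ≤ ∏ i ∈ Finset.univ.filter (fun i : Fin n => (i : ℕ) < r), nuv (Xγ γ) i :=
          Finset.prod_nonneg fun i _ => hwnn i
        have h5 : nuv (Xγ γ) ⟨r, hrn'⟩
              * ∏ i ∈ Finset.univ.filter (fun i : Fin n => (i : ℕ) < r), nuv (Xγ γ) i
            ≤ (K * γ) * (c + 1) :=
          mul_le_mul hqq.2 h3 h4 (by positivity)
        calc esym (r + 1) (nuv (Xγ γ))
            ≤ (n.choose (r + 1) : ℝ) * (nuv (Xγ γ) ⟨r, hrn'⟩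
              * ∏ i ∈ Finset.univ.filter (fun i : Fin n => (i : ℕ) < r), nuv (Xγ γ) i) := by
              rw [← h2]; exact h1
          _ ≤ (n.choose (r + 1) : ℝ) * ((K * γ) * (c + 1)) :=
              mul_le_mul_of_nonneg_left h5 (by positivity)
          _ = ((n.choose (r + 1) : ℝ) * ((c + 1) * K)) * γ := by ring
      have hzeroT : Tendsto (fun γ : ℝ => ((n.choose (r + 1) : ℝ) * ((c + 1) * K)) * γ)
          (nhdsWithin (0:ℝ) (Set.Ioi 0)) (nhds 0) := by
        have h0 : Tendsto (fun γ : ℝ => ((n.choose (r + 1) : ℝ) * ((c + 1) * K)) * γ)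
            (nhds 0) (nhds (((n.choose (r + 1) : ℝ) * ((c + 1) * K)) * 0)) :=
          (continuous_const.mul continuous_id).tendsto 0
        rw [mul_zero] at h0
        exact h0.mono_left nhdsWithin_le_nhds
      have hle0 : esym (r + 1) (nuv Xbar) ≤ 0 :=
        le_of_tendsto_of_tendsto hE1T hzeroT hbound
      have hP1pos : 0 < ∏ i ∈ Finset.univ.filter (fun i : Fin n => (i : ℕ) < r + 1), nuv Xbar i :=
        Finset.prod_pos fun i hi => pos_of_card_nonzero (nuv_nonneg Xbar) (nuv_antitone Xbar)
          (by rw [← rank_eq_card_nuv]; omega) i (Finset.mem_filter.1 hi).2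
      have := lt_of_lt_of_le hP1pos (top_prod_le_esym (nuv_nonneg Xbar) (by omega))
      linarith
  -- the product minimality
  have hprod : ∀ X : Matrix (Fin n) (Fin m) ℝ, L X = y → X.rank = r →
      (∏ i ∈ Finset.univ.filter (fun i : Fin n => (i : ℕ) < r), singval Xbar i)
        ≤ ∏ i ∈ Finset.univ.filter (fun i : Fin n => (i : ℕ) < r), singval X i := by
    intro X hXy2 hXrank
    have hφT : Tendsto (fun γ : ℝ => ∏ i ∈ Finset.univ.filter (fun i : Fin n => (i : ℕ) < r),
        (nuv X i + γ)) (nhdsWithin (0:ℝ) (Set.Ioi 0))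
        (nhds (∏ i ∈ Finset.univ.filter (fun i : Fin n => (i : ℕ) < r), nuv X i)) := by
      have hcont : Continuous fun γ : ℝ =>
          ∏ i ∈ Finset.univ.filter (fun i : Fin n => (i : ℕ) < r), (nuv X i + γ) :=
        continuous_finset_prod _ fun i _ => continuous_const.add continuous_id
      have h0 := hcont.tendsto (0 : ℝ)
      simp only [add_zero] at h0
      exact h0.mono_left nhdsWithin_le_nhds
    have hEb : ∀ᶠ γ in nhdsWithin (0:ℝ) (Set.Ioi 0), esym r (nuv (Xγ γ))
        ≤ ∏ i ∈ Finset.univ.filter (fun i : Fin n => (i : ℕ) < r), (nuv X i + γ) := by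
      filter_upwards [hev1] with γ hγIoo
      obtain ⟨hγ, _⟩ := hγIoo
      have h1 : esym r (nuv (Xγ γ)) * γ ^ (n - r) ≤ ∏ i, (nuv (Xγ γ) i + γ) :=
        eval_lower _ hγ.le hrn
      have h2 := hdet γ hγ X hXy2
      have h3 : ∏ i, (nuv X i + γ)
          = (∏ i ∈ Finset.univ.filter (fun i : Fin n => (i : ℕ) < r), (nuv X i + γ))
            * γ ^ (n - r) := prod_split_vanish X hrn (hvan X hXrank) γ
      refine le_of_mul_le_mul_right ?_ (pow_pos hγ (n - r))
      calc esym r (nuv (Xγ γ)) * γ ^ (n - r) ≤ ∏ i, (nuv (Xγ γ) i + γ) := h1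
        _ ≤ ∏ i, (nuv X i + γ) := h2
        _ = _ := h3
    have hcle : c ≤ ∏ i ∈ Finset.univ.filter (fun i : Fin n => (i : ℕ) < r), nuv X i :=
      le_of_tendsto_of_tendsto hErT hφT hEb
    have hceq : c = ∏ i ∈ Finset.univ.filter (fun i : Fin n => (i : ℕ) < r), nuv Xbar i := by
      rw [hcdef]
      exact esym_eq_top_prod hrn (hvan Xbar hrankXbar)
    have key : ∏ i ∈ Finset.univ.filter (fun i : Fin n => (i : ℕ) < r), nuv Xbar i
        ≤ ∏ i ∈ Finset.univ.filter (fun i : Fin n => (i : ℕ) < r), nuv X i := hceq ▸ hcle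
    calc ∏ i ∈ Finset.univ.filter (fun i : Fin n => (i : ℕ) < r), singval Xbar i
        = Real.sqrt (∏ i ∈ Finset.univ.filter (fun i : Fin n => (i : ℕ) < r), nuv Xbar i) := by
          rw [← prod_sqrt _ _ (fun i _ => nuv_nonneg Xbar i)]
          exact Finset.prod_congr rfl fun i _ => singval_eq Xbar i
      _ ≤ Real.sqrt (∏ i ∈ Finset.univ.filter (fun i : Fin n => (i : ℕ) < r), nuv X i) :=
          Real.sqrt_le_sqrt key
      _ = ∏ i ∈ Finset.univ.filter (fun i : Fin n => (i : ℕ) < r), singval X i := by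
          rw [← prod_sqrt _ _ (fun i _ => nuv_nonneg X i)]
          exact (Finset.prod_congr rfl fun i _ => singval_eq X i).symm
  refine ⟨hy, hrankXbar, hprod, ?_⟩
  intro hrn'
  rw [Asymptotics.isBigO_iff]
  refine ⟨K, ?_⟩
  filter_upwards [hq hrn', self_mem_nhdsWithin] with γ hqq hγ
  have hγ' : 0 < γ := hγ
  have h1 : singval (Xγ γ) ⟨r, hrn'⟩ ^ 2 = nuv (Xγ γ) ⟨r, hrn'⟩ := by
    rw [singval_eq]
    exact Real.sq_sqrt (nuv_nonneg _ _)
  rw [h1, Real.norm_eq_abs, Real.norm_eq_abs, abs_of_nonneg hqq.1, abs_of_pos hγ']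
  exact hqq.2
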